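/- Let u : ℝ → ℝ be a convex function such that the image of its derivative u' (defined on the set of differentiability points) has Lebesgue measure zero in ℝ. Then the second derivative measure u'' is purely atomic, and its support equals the set of points where u' (i.e., the subdifferential) is discontinuous (points of non-differentiability of u). -/

import Mathlib

open MeasureTheory Set Function Filter Topology ENNReal

section analytic
variable {u : ℝ → ℝ} {g : StieltjesFunction ℝ}
  (hu : ConvexOn ℝ Set.univ u)
  (hg : ∀ x, HasDerivWithinAt u (g x) (Set.Ioi x) x)

include hg in
lemma slope_tendsto_right (x : ℝ) : Tendsto (slope u x) (𝓝[>] x) (𝓝 (g x)) :=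
  (hasDerivWithinAt_iff_tendsto_slope' (notMem_Ioi.2 le_rfl)).1 (hg x)

include hu hg in
lemma g_le_slope {y z : ℝ} (h : y < z) : g y ≤ slope u y z := by
  refine le_of_tendsto (slope_tendsto_right hg y) ?_
  filter_upwards [Ioo_mem_nhdsGT_of_mem ⟨le_rfl, h⟩] with w hw
  have := hu.secant_mono (Set.mem_univ y) (Set.mem_univ w) (Set.mem_univ z)
    (ne_of_gt hw.1) (ne_of_gt h) hw.2.le
  simpa [slope_def_field] using this

include hu hg in
lemma slope_le_g {y z : ℝ} (h : y < z) : slope u y z ≤ g z := by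
  refine ge_of_tendsto (slope_tendsto_right hg z) ?_
  filter_upwards [self_mem_nhdsWithin] with w hw
  have := hu.slope_mono_adjacent (Set.mem_univ y) (Set.mem_univ w) h hw
  simpa [slope_def_field] using this

end analytic

section analytic2
variable {u : ℝ → ℝ} {g : StieltjesFunction ℝ}
  (hu : ConvexOn ℝ Set.univ u)
  (hg : ∀ x, HasDerivWithinAt u (g x) (Set.Ioi x) x)

include hu in
lemma u_cont : Continuous u := by
  exact continuousOn_univ.1 (hu.continuousOn isOpen_univ)

include hu hg in
lemma slope_le_leftLim {y x : ℝ} (h : y < x) : slope u y x ≤ leftLim g x := by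
  have t1 : Tendsto (fun z => slope u y z) (𝓝[<] x) (𝓝 (slope u y x)) := by
    have hc : ContinuousAt (fun z => (u z - u y) / (z - y)) x :=
      (((u_cont hu).continuousAt.sub continuousAt_const).div
        (continuousAt_id.sub continuousAt_const) (sub_ne_zero.2 h.ne'))
    have : ContinuousAt (fun z => slope u y z) x := by
      simpa only [slope_def_field] using hc
    exact (this.tendsto).mono_left nhdsWithin_le_nhds
  have t2 : Tendsto g (𝓝[<] x) (𝓝 (leftLim g x)) := g.mono.tendsto_leftLim x
  refine le_of_tendsto_of_tendsto t1 t2 ?_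
  filter_upwards [Ioo_mem_nhdsLT_of_mem ⟨h, le_rfl⟩] with z hz
  exact slope_le_g hu hg hz.1

include hu hg in
lemma diff_iff (x : ℝ) : DifferentiableAt ℝ u x ↔ leftLim g x = g x := by
  constructor
  · intro hx
    have hderiv : deriv u x = g x := by
      rw [← hx.derivWithin (uniqueDiffWithinAt_Ioi x)]
      exact (hg x).derivWithin (uniqueDiffWithinAt_Ioi x)
    have hslope : Tendsto (slope u x) (𝓝[<] x) (𝓝 (g x)) := by
      have := hasDerivAt_iff_tendsto_slope.1 hx.hasDerivAt
      rw [hderiv] at this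
      exact this.mono_left (nhdsWithin_mono x fun z hz => ne_of_lt hz)
    refine le_antisymm (g.mono.leftLim_le le_rfl) ?_
    refine le_of_tendsto hslope ?_
    filter_upwards [self_mem_nhdsWithin] with z hz
    rw [slope_comm]
    exact slope_le_leftLim hu hg hz
  · intro hx
    have left : Tendsto (slope u x) (𝓝[<] x) (𝓝 (g x)) := by
      have t2 : Tendsto g (𝓝[<] x) (𝓝 (g x)) := by
        rw [← hx]; exact g.mono.tendsto_leftLim x
      refine tendsto_of_tendsto_of_tendsto_of_le_of_le' t2 tendsto_const_nhds ?_ ?_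
      · filter_upwards [self_mem_nhdsWithin] with z hz
        rw [slope_comm]
        exact g_le_slope hu hg hz
      · filter_upwards [self_mem_nhdsWithin] with z hz
        rw [slope_comm]
        exact slope_le_g hu hg hz
    have right : Tendsto (slope u x) (𝓝[>] x) (𝓝 (g x)) := slope_tendsto_right hg x
    have : Tendsto (slope u x) (𝓝[≠] x) (𝓝 (g x)) := by
      rw [← nhdsLT_sup_nhdsGT x, tendsto_sup]
      exact ⟨left, right⟩
    exact (hasDerivAt_iff_tendsto_slope.2 this).differentiableAt

end analytic2

section measurepart

lemma key_compact (g : StieltjesFunction ℝ) {c d : ℝ} {K : Set ℝ} (hK : IsCompact K)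
    (hsub : K ⊆ g ⁻¹' (Set.Ioc c d) ∩ {x | leftLim g x = g x}) :
    g.measure K ≤ ENNReal.ofReal (d - c) := by
  rcases K.eq_empty_or_nonempty with rfl | hne
  · simp
  have ha : sInf K ∈ K := hK.sInf_mem hne
  have hb : sSup K ∈ K := hK.sSup_mem hne
  have hKsub : K ⊆ insert (sInf K) (Set.Ioc (sInf K) (sSup K)) := by
    intro x hx
    rcases eq_or_lt_of_le (csInf_le hK.bddBelow hx) with h | h
    · exact Set.mem_insert_iff.2 (Or.inl h.symm)
    · exact Set.mem_insert_iff.2 (Or.inr ⟨h, le_csSup hK.bddAbove hx⟩)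
  calc g.measure K ≤ g.measure (insert (sInf K) (Set.Ioc (sInf K) (sSup K))) :=
        measure_mono hKsub
    _ ≤ g.measure {sInf K} + g.measure (Set.Ioc (sInf K) (sSup K)) := by
        rw [Set.insert_eq]; exact measure_union_le _ _
    _ ≤ ENNReal.ofReal (d - c) := by
        rw [g.measure_singleton, (hsub ha).2, sub_self, ENNReal.ofReal_zero, zero_add,
          g.measure_Ioc]
        exact ENNReal.ofReal_le_ofReal (sub_le_sub (hsub hb).1.2 (hsub ha).1.1.le)

lemma key_Ioc (g : StieltjesFunction ℝ) (c d : ℝ) :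
    g.measure (g ⁻¹' (Set.Ioc c d) ∩ {x | leftLim g x = g x}) ≤ ENNReal.ofReal (d - c) := by
  have hCmeas : MeasurableSet {x | leftLim g x = g x} := by
    have h1 : MeasurableSet {x | leftLim (⇑g) x ≠ g x} := g.countable_leftLim_ne.measurableSet
    have h2 : {x | leftLim (⇑g) x = g x} = {x | leftLim (⇑g) x ≠ g x}ᶜ := by
      ext x; simp
    rw [h2]; exact h1.compl
  set S := g ⁻¹' (Set.Ioc c d) ∩ {x | leftLim g x = g x} with hS
  have hSmeas : MeasurableSet S := (g.mono.measurable measurableSet_Ioc).inter hCmeas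
  have main : ∀ n : ℕ, g.measure (S ∩ Set.Icc (-(n:ℝ)) n) ≤ ENNReal.ofReal (d - c) := by
    intro n
    have hfin : g.measure (S ∩ Set.Icc (-(n:ℝ)) n) ≠ ∞ := by
      refine ne_top_of_le_ne_top ?_ (measure_mono Set.inter_subset_right)
      rw [g.measure_Icc]; exact ENNReal.ofReal_ne_top
    refine ENNReal.le_of_forall_pos_le_add fun ε hε _ => ?_
    obtain ⟨K, hKsub, hKcomp, hKlt⟩ :=
      (hSmeas.inter measurableSet_Icc).exists_isCompact_lt_add hfin
        (ε := ε) (by exact_mod_cast hε.ne')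
    refine hKlt.le.trans (add_le_add_left ?_ _)
    exact key_compact g hKcomp fun x hx => (hKsub hx).1
  have hU : (⋃ n : ℕ, S ∩ Set.Icc (-(n:ℝ)) n) = S := by
    ext x
    simp only [Set.mem_iUnion, Set.mem_inter_iff, Set.mem_Icc]
    constructor
    · rintro ⟨n, hx, _⟩; exact hx
    · intro hx
      obtain ⟨n, hn⟩ := exists_nat_ge |x|
      exact ⟨n, hx, (abs_le.1 hn).1, (abs_le.1 hn).2⟩
  have hmono : Monotone fun n : ℕ => S ∩ Set.Icc (-(n:ℝ)) n := by
    intro n m hnm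
    exact Set.inter_subset_inter_right _ (Set.Icc_subset_Icc
      (neg_le_neg (by exact_mod_cast hnm)) (by exact_mod_cast hnm))
  have := tendsto_measure_iUnion_atTop (μ := g.measure) hmono
  rw [hU] at this
  exact le_of_tendsto this (Filter.Eventually.of_forall main)

lemma key_length (g : StieltjesFunction ℝ) (T : Set ℝ) :
    g.measure (g ⁻¹' T ∩ {x | leftLim g x = g x}) ≤ StieltjesFunction.id.length T := by
  rw [StieltjesFunction.length_eq]
  simp only [le_iInf_iff]
  intro a b hT
  refine le_trans (measure_mono (Set.inter_subset_inter_left _ (Set.preimage_mono (fun x hx => hT ⟨hx, fun h => not_isBot x h⟩)))) ?_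
  simpa [StieltjesFunction.id] using key_Ioc g a b

end measurepart

/-- Let `u : ℝ → ℝ` be convex, with right derivative given by a Stieltjes function `g`
(monotone and right-continuous). If the image of the derivative of `u` on the set of
differentiability points has Lebesgue measure zero, then the second derivative measure
`g.measure` is purely atomic with atoms exactly at the points of non-differentiability
of `u`: it vanishes on the set of differentiability points, and each non-differentiability
point is an atom. -/
theorem stmt3 (u : ℝ → ℝ) (g : StieltjesFunction ℝ)
    (hu : ConvexOn ℝ Set.univ u)
    (hg : ∀ x, HasDerivWithinAt u (g x) (Set.Ioi x) x)
    (himg : volume (deriv u '' {x | DifferentiableAt ℝ u x}) = 0) :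
    g.measure {x | DifferentiableAt ℝ u x} = 0 ∧
    ∀ x, ¬ DifferentiableAt ℝ u x → 0 < g.measure {x} := by
  have hCD : ∀ x, DifferentiableAt ℝ u x ↔ leftLim g x = g x := diff_iff hu hg
  have hderiv : ∀ x, DifferentiableAt ℝ u x → deriv u x = g x := by
    intro x hx
    rw [← hx.derivWithin (uniqueDiffWithinAt_Ioi x)]
    exact (hg x).derivWithin (uniqueDiffWithinAt_Ioi x)
  constructor
  · obtain ⟨t, hst, htm, ht0⟩ := exists_measurable_superset_of_null himg
    have houter : StieltjesFunction.id.outer t = 0 := by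
      rw [Real.volume_val, StieltjesFunction.measure_def] at ht0
      exact ht0
    refine le_antisymm ?_ zero_le
    refine ENNReal.le_of_forall_pos_le_add fun ε hε _ => ?_
    rw [zero_add]
    have hlt : (⨅ (tt : ℕ → Set ℝ) (_ : t ⊆ ⋃ i, tt i),
        ∑' i, StieltjesFunction.id.length (tt i)) < (ε : ℝ≥0∞) := by
      rw [← OuterMeasure.ofFunction_apply]
      show StieltjesFunction.id.outer t < (ε : ℝ≥0∞)
      rw [houter]
      exact_mod_cast hε
    simp only [iInf_lt_iff] at hlt
    obtain ⟨tt, htsub, hsum⟩ := hlt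
    calc g.measure {x | DifferentiableAt ℝ u x}
        ≤ g.measure (⋃ i, g ⁻¹' (tt i) ∩ {x | leftLim g x = g x}) := by
          refine measure_mono fun x hx => ?_
          have hgx : (g x : ℝ) ∈ t := by
            rw [← hderiv x hx]
            exact hst (Set.mem_image_of_mem _ hx)
          obtain ⟨i, hi⟩ := Set.mem_iUnion.1 (htsub hgx)
          exact Set.mem_iUnion.2 ⟨i, hi, (hCD x).1 hx⟩
      _ ≤ ∑' i, g.measure (g ⁻¹' (tt i) ∩ {x | leftLim g x = g x}) := measure_iUnion_le _
      _ ≤ ∑' i, StieltjesFunction.id.length (tt i) :=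
          ENNReal.tsum_le_tsum fun i => key_length g (tt i)
      _ ≤ (ε : ℝ≥0∞) := hsum.le
  · intro x hx
    have hne : leftLim g x ≠ g x := fun h => hx ((hCD x).2 h)
    have hlt : leftLim g x < g x := lt_of_le_of_ne (g.mono.leftLim_le le_rfl) hne
    rw [g.measure_singleton]
    exact ENNReal.ofReal_pos.2 (sub_pos.2 hlt)
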